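/- Let $(X,Y)$ be jointly Gaussian with mean zero, unit variances, and correlation $\rho \in [-1,1]$, and let $Z = \sigma_s(X)\sigma_s(Y)$ where $\sigma_s(x) = (\max(0,x))^s$ for $s \in \mathbb{N}$. Then for any $t \geq 0$, $\Pr(Z > t) \leq \exp(-t^{1/s}/(1+\rho))$. -/

import Mathlib

open MeasureTheory ProbabilityTheory

/-- The law of a centered bivariate Gaussian with unit variances and correlation `ρ`. -/
noncomputable def jointGaussian (ρ : ℝ) : Measure (ℝ × ℝ) :=
  ((gaussianReal 0 1).prod (gaussianReal 0 1)).map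
    (fun p => (p.1, ρ * p.1 + Real.sqrt (1 - ρ ^ 2) * p.2))

open Real
open scoped ENNReal NNReal

lemma lintegral_exp_mul_gaussian (c : ℝ) :
    ∫⁻ x, ENNReal.ofReal (Real.exp (c * x)) ∂(gaussianReal 0 1) =
      ENNReal.ofReal (Real.exp (c ^ 2 / 2)) := by
  rw [gaussianReal_of_var_ne_zero 0 one_ne_zero,
    lintegral_withDensity_eq_lintegral_mul _ (measurable_gaussianPDF 0 1)
      (by fun_prop)]
  have hpt : ∀ x : ℝ, (gaussianPDF 0 1 * fun x => ENNReal.ofReal (Real.exp (c * x))) x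
      = ENNReal.ofReal (Real.exp (c ^ 2 / 2)) * gaussianPDF c 1 x := by
    intro x
    simp only [Pi.mul_apply, gaussianPDF, gaussianPDFReal, NNReal.coe_one]
    rw [← ENNReal.ofReal_mul (by positivity), ← ENNReal.ofReal_mul (by positivity)]
    congr 1
    have h1 : -(x - 0) ^ 2 / (2 * 1) + c * x = -(x - c) ^ 2 / (2 * 1) + c ^ 2 / 2 := by ring
    rw [mul_assoc, ← Real.exp_add, h1, Real.exp_add]
    ring
  simp_rw [hpt]
  rw [lintegral_const_mul _ (measurable_gaussianPDF c 1), lintegral_gaussianPDF_eq_one c one_ne_zero,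
    mul_one]

lemma chernoff {α : Type*} [MeasurableSpace α] (μ : Measure α) {f : α → ℝ}
    (hf : Measurable f) {l a : ℝ} (hl : 0 ≤ l) :
    μ {x | a < f x} ≤ ENNReal.ofReal (Real.exp (-(l * a))) *
      ∫⁻ x, ENNReal.ofReal (Real.exp (l * f x)) ∂μ := by
  set ε : ℝ≥0∞ := ENNReal.ofReal (Real.exp (l * a)) with hε
  have hsub : {x | a < f x} ⊆ {x | ε ≤ ENNReal.ofReal (Real.exp (l * f x))} := by
    intro x hx
    exact ENNReal.ofReal_le_ofReal (Real.exp_le_exp.2 (mul_le_mul_of_nonneg_left hx.le hl))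
  have h := mul_meas_ge_le_lintegral₀ (μ := μ) (f := fun x => ENNReal.ofReal (Real.exp (l * f x)))
    (by fun_prop) ε
  have hεpos : ε ≠ 0 := by simp [hε, Real.exp_pos]
  have hεtop : ε ≠ ⊤ := ENNReal.ofReal_ne_top
  have h2 : μ {x | a < f x} ≤ ε⁻¹ * ∫⁻ x, ENNReal.ofReal (Real.exp (l * f x)) ∂μ := by
    calc μ {x | a < f x} ≤ μ {x | ε ≤ ENNReal.ofReal (Real.exp (l * f x))} := measure_mono hsub
    _ = ε⁻¹ * (ε * μ {x | ε ≤ ENNReal.ofReal (Real.exp (l * f x))}) := by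
        rw [← mul_assoc, ENNReal.inv_mul_cancel hεpos hεtop, one_mul]
    _ ≤ _ := mul_le_mul_right h _
  refine h2.trans_eq ?_
  congr 1
  rw [hε, ← ENNReal.ofReal_inv_of_pos (Real.exp_pos _), ← Real.exp_neg]

set_option maxHeartbeats 1000000 in
/-- For `(X,Y) ~ N(0, Σ_ρ)`, `Z = σ_s(X) σ_s(Y)` with `σ_s(x) = (max 0 x)^s`, and `t ≥ 0`,
`Pr(Z > t) ≤ exp(-t^(1/s)/(1+ρ))`. -/
theorem sigmaS_product_tail_bound (s : ℕ) (hs : 0 < s)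
    (ρ : ℝ) (hρ : ρ ∈ Set.Icc (-1 : ℝ) 1) (t : ℝ) (ht : 0 ≤ t) :
    jointGaussian ρ {p : ℝ × ℝ | t < (max 0 p.1) ^ s * (max 0 p.2) ^ s} ≤
      ENNReal.ofReal (Real.exp (-(t ^ ((1 : ℝ) / s)) / (1 + ρ))) := by
  have hmf : Measurable (fun p : ℝ × ℝ => (p.1, ρ * p.1 + Real.sqrt (1 - ρ ^ 2) * p.2)) := by
    fun_prop
  have hprob : IsProbabilityMeasure (jointGaussian ρ) := by
    unfold jointGaussian; exact Measure.isProbabilityMeasure_map hmf.aemeasurable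
  rcases eq_or_lt_of_le hρ.1 with hρ1 | hρ1
  · subst hρ1
    rw [show (1:ℝ) + -1 = 0 by norm_num, div_zero, Real.exp_zero, ENNReal.ofReal_one]
    exact prob_le_one
  rcases eq_or_lt_of_le ht with ht0 | ht0
  · rw [← ht0, Real.zero_rpow (one_div_ne_zero (Nat.cast_ne_zero.mpr hs.ne')), neg_zero,
      zero_div, Real.exp_zero, ENNReal.ofReal_one]
    exact prob_le_one
  have h1ρ : 0 < 1 + ρ := by linarith
  have hsne : ((s : ℝ)) ≠ 0 := Nat.cast_ne_zero.mpr hs.ne'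
  set u : ℝ := t ^ ((1 : ℝ) / s) with hu
  have hupos : 0 < u := Real.rpow_pos_of_pos ht0 _
  set a : ℝ := 2 * Real.sqrt u with ha
  have hapos : 0 < a := by positivity
  set c : ℝ := Real.sqrt (1 - ρ ^ 2) with hc
  have hcsq : c ^ 2 = 1 - ρ ^ 2 := Real.sq_sqrt (by nlinarith [hρ.2])
  set l : ℝ := a / (2 * (1 + ρ)) with hl
  have hl0 : 0 ≤ l := by positivity
  have hasq : a ^ 2 = 4 * u := by
    rw [ha, mul_pow, Real.sq_sqrt hupos.le]; ring
  -- event inclusion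
  have hsub : {p : ℝ × ℝ | t < (max 0 p.1) ^ s * (max 0 p.2) ^ s}
      ⊆ {p : ℝ × ℝ | a < p.1 + p.2} := by
    intro p hp
    simp only [Set.mem_setOf_eq] at hp ⊢
    set m1 := max 0 p.1 with hm1d
    set m2 := max 0 p.2 with hm2d
    have hm1 : 0 ≤ m1 := le_max_left _ _
    have hm2 : 0 ≤ m2 := le_max_left _ _
    have h2 : t < (m1 * m2) ^ s := by rw [mul_pow]; exact hp
    have hmul : u < m1 * m2 := by
      have h3 := Real.rpow_lt_rpow ht h2 (by positivity : (0:ℝ) < 1 / s)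
      rwa [← Real.rpow_natCast (m1 * m2) s, ← Real.rpow_mul (by positivity), mul_one_div,
        div_self hsne, Real.rpow_one] at h3
    have hm1p : 0 < m1 := by nlinarith
    have hm2p : 0 < m2 := by nlinarith
    have hp1 : m1 = p.1 := max_eq_right (by rw [hm1d] at hm1p; exact (lt_max_iff.mp hm1p).resolve_left (lt_irrefl 0) |>.le)
    have hp2 : m2 = p.2 := max_eq_right (by rw [hm2d] at hm2p; exact (lt_max_iff.mp hm2p).resolve_left (lt_irrefl 0) |>.le)
    have hsqrt : Real.sqrt u < Real.sqrt (m1 * m2) := Real.sqrt_lt_sqrt hupos.le hmul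
    rw [Real.sqrt_mul hm1] at hsqrt
    have hamgm : 2 * (Real.sqrt m1 * Real.sqrt m2) ≤ m1 + m2 := by
      nlinarith [sq_nonneg (Real.sqrt m1 - Real.sqrt m2), Real.sq_sqrt hm1, Real.sq_sqrt hm2]
    rw [← hp1, ← hp2, ha]
    nlinarith
  have hgm : Measurable (fun q : ℝ × ℝ => (1 + ρ) * q.1 + c * q.2) := by fun_prop
  have hmap : jointGaussian ρ {p : ℝ × ℝ | a < p.1 + p.2}
      = ((gaussianReal 0 1).prod (gaussianReal 0 1))
          {q : ℝ × ℝ | a < (1 + ρ) * q.1 + c * q.2} := by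
    rw [jointGaussian, ← hc, Measure.map_apply hmf
      (measurableSet_lt measurable_const (measurable_fst.add measurable_snd) :
        MeasurableSet {p : ℝ × ℝ | a < p.1 + p.2})]
    congr 1
    ext q
    simp only [Set.mem_preimage, Set.mem_setOf_eq]
    constructor <;> intro h <;> [nlinarith; nlinarith]
  have hsplit : ∀ q : ℝ × ℝ, ENNReal.ofReal (Real.exp (l * ((1 + ρ) * q.1 + c * q.2)))
      = ENNReal.ofReal (Real.exp ((l * (1 + ρ)) * q.1))
        * ENNReal.ofReal (Real.exp ((l * c) * q.2)) := by
    intro q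
    rw [← ENNReal.ofReal_mul (Real.exp_nonneg _), ← Real.exp_add]
    congr 2
    ring
  have hkey : -(l * a) + ((l * (1 + ρ)) ^ 2 / 2 + (l * c) ^ 2 / 2) = -u / (1 + ρ) := by
    rw [mul_pow, mul_pow, hcsq, hl]
    field_simp
    linear_combination (-8 * (1 + ρ)) * Real.sq_sqrt hupos.le
  calc jointGaussian ρ {p : ℝ × ℝ | t < (max 0 p.1) ^ s * (max 0 p.2) ^ s}
      ≤ jointGaussian ρ {p : ℝ × ℝ | a < p.1 + p.2} := measure_mono hsub
    _ = ((gaussianReal 0 1).prod (gaussianReal 0 1))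
          {q : ℝ × ℝ | a < (1 + ρ) * q.1 + c * q.2} := hmap
    _ ≤ ENNReal.ofReal (Real.exp (-(l * a))) *
          ∫⁻ q, ENNReal.ofReal (Real.exp (l * ((1 + ρ) * q.1 + c * q.2)))
            ∂((gaussianReal 0 1).prod (gaussianReal 0 1)) := chernoff _ hgm hl0
    _ = ENNReal.ofReal (Real.exp (-(l * a))) *
          (ENNReal.ofReal (Real.exp ((l * (1 + ρ)) ^ 2 / 2))
            * ENNReal.ofReal (Real.exp ((l * c) ^ 2 / 2))) := by
        simp_rw [hsplit]
        rw [lintegral_prod_mul (f := fun x => ENNReal.ofReal (Real.exp (l * (1 + ρ) * x)))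
          (g := fun y => ENNReal.ofReal (Real.exp (l * c * y))) (by fun_prop) (by fun_prop),
          lintegral_exp_mul_gaussian, lintegral_exp_mul_gaussian]
    _ = ENNReal.ofReal (Real.exp (-(t ^ ((1 : ℝ) / s)) / (1 + ρ))) := by
        rw [← ENNReal.ofReal_mul (Real.exp_nonneg _), ← ENNReal.ofReal_mul (Real.exp_nonneg _),
          ← Real.exp_add, ← Real.exp_add, hkey, neg_div]
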